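/- arXiv:2007.04468 — 2 statements merged into one kernel-verified Lean document; each statement's English description precedes it below -/
import Mathlib

section
/- Let H_1, …, H_t be pairwise vertex-disjoint graphs, let K_i ⊆ V(H_i) be a set of terminals of H_i, and for each i let v_1(i) and v_2(i) be two distinct vertices of K_i. Let G be the graph with vertex set ⋃_i V(H_i) and edge set ⋃_i E(H_i) together with the edges v_2(i)v_1(i+1) for every i ∈ {1, …, t−1}, and let K = ⋃_i K_i. Then there exists a set S with K ⊆ S ⊆ V(G) such that G[S] is a tree if and only if for every i ∈ {1, …, t} there exists a set S_i with K_i ⊆ S_i ⊆ V(H_i) such that H_i[S_i] is a tree. -/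
open SimpleGraph

/-- The chained disjoint union of the graphs `H i`: the disjoint union of the
`H i` together with, for each `i ∈ {1, …, t-1}`, an edge joining the
designated vertex `v₂ i` of `H i` to the designated vertex `v₁ (i+1)` of
`H (i+1)`. -/
def chainGraph {t : ℕ} (V : Fin t → Type) (H : ∀ i, SimpleGraph (V i))
    (v₁ v₂ : ∀ i, V i) : SimpleGraph (Σ i, V i) :=
  SimpleGraph.fromRel (fun a b =>
    (∃ h : a.1 = b.1, (H b.1).Adj (h ▸ a.2) b.2) ∨
    ((a.1 : ℕ) + 1 = (b.1 : ℕ) ∧ a.2 = v₂ a.1 ∧ b.2 = v₁ b.1))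

section ChainAux

variable {t : ℕ} {V : Fin t → Type} {H : ∀ i, SimpleGraph (V i)} {v₁ v₂ : ∀ i, V i}

lemma chain_adj_same {i : Fin t} {x y : V i}
    (h : (chainGraph V H v₁ v₂).Adj ⟨i, x⟩ ⟨i, y⟩) : (H i).Adj x y := by
  rw [chainGraph, fromRel_adj] at h
  obtain ⟨hne, h | h⟩ := h <;>
    rcases h with ⟨h', ha⟩ | ⟨hs, -⟩
  · exact ha
  · dsimp only at hs; omega
  · exact ha.symm
  · dsimp only at hs; omega

lemma chain_adj_mk {i : Fin t} {x y : V i} (h : (H i).Adj x y) :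
    (chainGraph V H v₁ v₂).Adj ⟨i, x⟩ ⟨i, y⟩ := by
  rw [chainGraph, fromRel_adj]
  exact ⟨fun he => h.ne (sigma_mk_injective he), Or.inl (Or.inl ⟨rfl, h⟩)⟩

lemma chain_adj_cross {i j : Fin t} (hij : (i : ℕ) + 1 = (j : ℕ)) :
    (chainGraph V H v₁ v₂).Adj ⟨i, v₂ i⟩ ⟨j, v₁ j⟩ := by
  rw [chainGraph, fromRel_adj]
  refine ⟨fun he => ?_, Or.inl (Or.inr ⟨hij, rfl, rfl⟩)⟩
  have : i = j := congrArg Sigma.fst he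
  omega

lemma sigma_eq_of_snd {a : Σ j, V j} {w : ∀ j, V j} (h : a.2 = w a.1) {i : Fin t}
    (hi : a.1 = i) : a = ⟨i, w i⟩ := by
  obtain ⟨j, x⟩ := a
  subst hi
  simpa using h

lemma cross_classify_le {i : Fin t} {a b : Σ j, V j}
    (h : (chainGraph V H v₁ v₂).Adj a b)
    (ha : (a.1 : ℕ) ≤ (i : ℕ)) (hb : ¬ (b.1 : ℕ) ≤ (i : ℕ)) :
    a = ⟨i, v₂ i⟩ ∧ ∃ hlt : (i : ℕ) + 1 < t, b = ⟨⟨(i : ℕ) + 1, hlt⟩, v₁ ⟨(i : ℕ) + 1, hlt⟩⟩ := by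
  rw [chainGraph, fromRel_adj] at h
  obtain ⟨-, h | h⟩ := h <;>
    rcases h with ⟨h', -⟩ | ⟨hs, h2, h3⟩
  · have : (a.1 : ℕ) = (b.1 : ℕ) := by rw [h']
    omega
  · have hai : a.1 = i := Fin.ext (by omega)
    have hlt : (i : ℕ) + 1 < t := by have := b.1.isLt; omega
    have hbi : b.1 = ⟨(i : ℕ) + 1, hlt⟩ := Fin.ext (by simp; omega)
    exact ⟨sigma_eq_of_snd h2 hai, hlt, sigma_eq_of_snd h3 hbi⟩
  · have : (b.1 : ℕ) = (a.1 : ℕ) := by rw [h']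
    omega
  · omega

lemma cross_classify_ge {i : Fin t} {a b : Σ j, V j}
    (h : (chainGraph V H v₁ v₂).Adj a b)
    (ha : (i : ℕ) ≤ (a.1 : ℕ)) (hb : ¬ (i : ℕ) ≤ (b.1 : ℕ)) :
    a = ⟨i, v₁ i⟩ ∧ ∃ hj : (b.1 : ℕ) + 1 = (i : ℕ), b = ⟨b.1, v₂ b.1⟩ := by
  rw [chainGraph, fromRel_adj] at h
  obtain ⟨-, h | h⟩ := h <;>
    rcases h with ⟨h', -⟩ | ⟨hs, h2, h3⟩
  · have : (a.1 : ℕ) = (b.1 : ℕ) := by rw [h']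
    omega
  · omega
  · have : (b.1 : ℕ) = (a.1 : ℕ) := by rw [h']
    omega
  · have hai : a.1 = i := Fin.ext (by omega)
    exact ⟨sigma_eq_of_snd h3 hai, by omega, sigma_eq_of_snd h2 rfl⟩

end ChainAux

section Induced

variable {t : ℕ} {V : Fin t → Type} {H : ∀ i, SimpleGraph (V i)} {v₁ v₂ : ∀ i, V i}
variable {S : Set (Σ j, V j)}

/-- the slice of `S` at level `i` -/
def secS (S : Set (Σ j, V j)) (i : Fin t) : Set (V i) := {x | (⟨i, x⟩ : Σ j, V j) ∈ S}

lemma sigma_eta_cast {a : Σ j, V j} {i : Fin t} (h : a.1 = i) :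
    (⟨i, h ▸ a.2⟩ : Σ j, V j) = a := by
  obtain ⟨j, x⟩ := a; subst h; rfl

/-- move a vertex of level `i` down into the slice -/
def eVert (i : Fin t) (u : ↥S) (h : (u : Σ j, V j).1 = i) : ↥(secS S i) :=
  ⟨h ▸ (u : Σ j, V j).2, show (⟨i, h ▸ (u : Σ j, V j).2⟩ : Σ j, V j) ∈ S by rw [sigma_eta_cast h]; exact u.2⟩

/-- the embedding of the slice into the whole vertex set -/
def phiV (i : Fin t) (x : ↥(secS S i)) : ↥S := ⟨⟨i, x.1⟩, x.2⟩

lemma phiV_injective (i : Fin t) : Function.Injective (phiV (S := S) i) := by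
  intro a b h
  exact Subtype.ext (sigma_mk_injective (congrArg Subtype.val h))

lemma phiV_eVert (i : Fin t) (u : ↥S) (h : (u : Σ j, V j).1 = i) :
    phiV i (eVert i u h) = u :=
  Subtype.ext (sigma_eta_cast h)

lemma eVert_phiV (i : Fin t) (x : ↥(secS S i)) (h : ((phiV i x : Σ j, V j)).1 = i) :
    eVert i (phiV i x) h = x :=
  Subtype.ext rfl

lemma adj_down {i : Fin t} {u w : ↥S} (hu : (u : Σ j, V j).1 = i) (hw : (w : Σ j, V j).1 = i)
    (h : (((chainGraph V H v₁ v₂)).induce S).Adj u w) :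
    ((H i).induce (secS S i)).Adj (eVert i u hu) (eVert i w hw) := by
  obtain ⟨⟨j, x⟩, hm⟩ := u
  obtain ⟨⟨k, y⟩, hm'⟩ := w
  dsimp only at hu hw
  subst hu; subst hw
  exact chain_adj_same h

/-- the graph homomorphism from the slice graph into the induced chain graph -/
def homUp (i : Fin t) : (H i).induce (secS S i) →g (chainGraph V H v₁ v₂).induce S where
  toFun := phiV i
  map_rel' := fun h => chain_adj_mk h

lemma uniq_le (i : Fin t) :
    ∀ a b a' b' : ↥S, ((chainGraph V H v₁ v₂).induce S).Adj a b →
      ((a : Σ j, V j).1 : ℕ) ≤ (i : ℕ) → ¬ ((b : Σ j, V j).1 : ℕ) ≤ (i : ℕ) →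
      ((chainGraph V H v₁ v₂).induce S).Adj a' b' →
      ((a' : Σ j, V j).1 : ℕ) ≤ (i : ℕ) → ¬ ((b' : Σ j, V j).1 : ℕ) ≤ (i : ℕ) →
      s(a, b) = s(a', b') := by
  intro a b a' b' h ha hb h' ha' hb'
  have hG : (chainGraph V H v₁ v₂).Adj (a : Σ j, V j) (b : Σ j, V j) := h
  have hG' : (chainGraph V H v₁ v₂).Adj (a' : Σ j, V j) (b' : Σ j, V j) := h'
  obtain ⟨ea, hlt, eb⟩ := cross_classify_le hG ha hb
  obtain ⟨ea', hlt', eb'⟩ := cross_classify_le hG' ha' hb'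
  have h1 : a = a' := Subtype.ext (ea.trans ea'.symm)
  have h2 : b = b' := Subtype.ext (eb.trans eb'.symm)
  rw [h1, h2]

lemma uniq_ge (i : Fin t) :
    ∀ a b a' b' : ↥S, ((chainGraph V H v₁ v₂).induce S).Adj a b →
      ((i : ℕ)) ≤ ((a : Σ j, V j).1 : ℕ) → ¬ ((i : ℕ)) ≤ ((b : Σ j, V j).1 : ℕ) →
      ((chainGraph V H v₁ v₂).induce S).Adj a' b' →
      ((i : ℕ)) ≤ ((a' : Σ j, V j).1 : ℕ) → ¬ ((i : ℕ)) ≤ ((b' : Σ j, V j).1 : ℕ) →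
      s(a, b) = s(a', b') := by
  intro a b a' b' h ha hb h' ha' hb'
  have hG : (chainGraph V H v₁ v₂).Adj (a : Σ j, V j) (b : Σ j, V j) := h
  have hG' : (chainGraph V H v₁ v₂).Adj (a' : Σ j, V j) (b' : Σ j, V j) := h'
  obtain ⟨ea, hj, eb⟩ := cross_classify_ge hG ha hb
  obtain ⟨ea', hj', eb'⟩ := cross_classify_ge hG' ha' hb'
  have hbb : (b : Σ j, V j).1 = (b' : Σ j, V j).1 := Fin.ext (by omega)
  have h2 : b = b' := Subtype.ext (by rw [eb, eb']; exact congrArg (fun j => (⟨j, v₂ j⟩ : Σ j, V j)) hbb)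
  have h1 : a = a' := Subtype.ext (ea.trans ea'.symm)
  rw [h1, h2]

end Induced

section Down

variable {t : ℕ} {V : Fin t → Type} {H : ∀ i, SimpleGraph (V i)} {v₁ v₂ : ∀ i, V i}
variable {S : Set (Σ j, V j)}

lemma down_ex {i : Fin t} :
    ∀ {u w : ↥S} (p : ((chainGraph V H v₁ v₂).induce S).Walk u w)
      (_ : ∀ z ∈ p.support, ((z : Σ j, V j)).1 = i)
      (hu : (u : Σ j, V j).1 = i) (hw : (w : Σ j, V j).1 = i),
      ∃ q : ((H i).induce (secS S i)).Walk (eVert i u hu) (eVert i w hw),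
        q.edges.map (Sym2.map (phiV i)) = p.edges ∧
        q.support.map (phiV i) = p.support := by
  intro u w p
  induction p with
  | nil =>
    intro _ hu hw
    exact ⟨Walk.nil, by simp, by simp [phiV_eVert]⟩
  | @cons u m w h q ih =>
    intro hs hu hw
    have hm : (m : Σ j, V j).1 = i := hs m (by simp)
    obtain ⟨q', h1, h2⟩ := ih (fun z hz => hs z (by simp [hz])) hm hw
    refine ⟨Walk.cons (adj_down hu hm h) q', ?_, ?_⟩
    · simp [h1, Sym2.map_pair_eq, phiV_eVert]
    · simp [h2, phiV_eVert]

end Down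

section WalkAux

variable {W : Type*} {G' : SimpleGraph W}

lemma cross_exists (A : W → Prop) :
    ∀ {x y : W} (q : G'.Walk x y), ¬ A x → A y →
      ∃ a b, G'.Adj a b ∧ ¬ A a ∧ A b ∧ s(a, b) ∈ q.edges := by
  intro x y q
  induction q with
  | nil => intro hx hy; exact absurd hy hx
  | @cons x m y h q ih =>
    intro hx hy
    by_cases hm : A m
    · exact ⟨x, m, h, hx, hm, by simp⟩
    · obtain ⟨a, b, hab, ha, hb, hmem⟩ := ih hm hy
      exact ⟨a, b, hab, ha, hb, by simp [hmem]⟩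

lemma trail_support (A : W → Prop)
    (huniq : ∀ a b a' b', G'.Adj a b → A a → ¬ A b → G'.Adj a' b' → A a' → ¬ A b' →
      s(a, b) = s(a', b')) :
    ∀ {x y : W} (p : G'.Walk x y), p.IsTrail → A x → A y → ∀ z ∈ p.support, A z := by
  intro x y p
  induction p with
  | nil =>
    intro _ hx _ z hz
    simp only [Walk.support_nil, List.mem_singleton] at hz; subst hz; exact hx
  | @cons x m y h q ih =>
    intro ht hx hy z hz
    rw [Walk.isTrail_cons] at ht
    by_cases hm : A m
    · rcases (by simpa using hz : z = x ∨ z ∈ q.support) with rfl | hz'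
      · exact hx
      · exact ih ht.1 hm hy z hz'
    · exfalso
      obtain ⟨a, b, hab, ha, hb, hmem⟩ := cross_exists A q hm hy
      have he : s(x, m) = s(b, a) := huniq x m b a h hx hm hab.symm hb ha
      rw [he, Sym2.eq_swap] at ht
      exact ht.2 hmem

end WalkAux

/-- Correctness of the AND-cross-composition: the chained instance has an
induced tree containing all terminals iff each of the `t` instances has one. -/
theorem stmt11 (t : ℕ) (ht : 1 ≤ t) (V : Fin t → Type) [∀ i, Fintype (V i)]
    (H : ∀ i, SimpleGraph (V i)) (K : ∀ i, Set (V i))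
    (v₁ v₂ : ∀ i, V i)
    (hv₁ : ∀ i, v₁ i ∈ K i) (hv₂ : ∀ i, v₂ i ∈ K i)
    (hne : ∀ i, v₁ i ≠ v₂ i) :
    (∃ S : Set (Σ i, V i),
        {a : Σ i, V i | a.2 ∈ K a.1} ⊆ S ∧
        ((chainGraph V H v₁ v₂).induce S).IsTree) ↔
    (∀ i, ∃ Si : Set (V i), K i ⊆ Si ∧ ((H i).induce Si).IsTree) := by
  classical
  constructor
  · rintro ⟨S, hKS, hT⟩ i
    refine ⟨secS S i, fun x hx => hKS hx, ?_⟩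
    constructor
    · -- connected
      haveI : Nonempty ↥(secS S i) := ⟨⟨v₁ i, hKS (hv₁ i)⟩⟩
      refine SimpleGraph.Connected.mk fun x y => ?_
      obtain ⟨wlk⟩ := hT.1.preconnected (phiV i x) (phiV i y)
      set p := wlk.toPath with hp
      have htr : p.1.IsTrail := p.2.isTrail
      have hA := trail_support (fun z : ↥S => ((z : Σ j, V j).1 : ℕ) ≤ (i : ℕ))
        (uniq_le i) p.1 htr le_rfl le_rfl
      have hB := trail_support (fun z : ↥S => (i : ℕ) ≤ ((z : Σ j, V j).1 : ℕ))
        (uniq_ge i) p.1 htr le_rfl le_rfl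
      obtain ⟨q, -, -⟩ := down_ex p.1
        (fun z hz => Fin.ext (le_antisymm (hA z hz) (hB z hz))) rfl rfl
      exact ⟨q.copy (eVert_phiV i x rfl) (eVert_phiV i y rfl)⟩
    · -- acyclic
      intro x c hc
      exact hT.2 (c.map (homUp i))
        ((Walk.map_isCycle_iff_of_injective (phiV_injective i)).mpr hc)
  · intro hAll
    choose Si hKi hTi using hAll
    refine ⟨{a : Σ j, V j | a.2 ∈ Si a.1}, fun a ha => hKi a.1 ha, ?_⟩
    set S : Set (Σ j, V j) := {a : Σ j, V j | a.2 ∈ Si a.1} with hS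
    have hanchor : ∀ (j : Fin t) (x : V j) (hx : (⟨j, x⟩ : Σ j, V j) ∈ S),
        ((chainGraph V H v₁ v₂).induce S).Reachable ⟨⟨j, x⟩, hx⟩
          ⟨⟨j, v₁ j⟩, hKi j (hv₁ j)⟩ := by
      intro j x hx
      have hr : ((H j).induce (secS S j)).Reachable ⟨x, hx⟩ ⟨v₁ j, hKi j (hv₁ j)⟩ :=
        (hTi j).1.preconnected _ _
      exact hr.map (homUp j)
    have h0 : (0 : ℕ) < t := ht
    have hstep : ∀ (n : ℕ) (hn : n + 1 < t),
        ((chainGraph V H v₁ v₂).induce S).Reachable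
          ⟨⟨⟨n, by omega⟩, v₁ _⟩, hKi _ (hv₁ _)⟩ ⟨⟨⟨n + 1, hn⟩, v₁ _⟩, hKi _ (hv₁ _)⟩ := by
      intro n hn
      refine ((hanchor ⟨n, by omega⟩ (v₂ _) (hKi _ (hv₂ _))).symm).trans ?_
      exact Adj.reachable (chain_adj_cross (by simp) :
        (chainGraph V H v₁ v₂).Adj ⟨⟨n, by omega⟩, v₂ _⟩ ⟨⟨n + 1, hn⟩, v₁ _⟩)
    have hzero : ∀ (n : ℕ) (hn : n < t),
        ((chainGraph V H v₁ v₂).induce S).Reachable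
          ⟨⟨⟨0, h0⟩, v₁ _⟩, hKi _ (hv₁ _)⟩ ⟨⟨⟨n, hn⟩, v₁ _⟩, hKi _ (hv₁ _)⟩ := by
      intro n
      induction n with
      | zero => intro hn; exact Reachable.refl _
      | succ n ihn => intro hn; exact (ihn (by omega)).trans (hstep n hn)
    constructor
    · haveI : Nonempty ↥S := ⟨⟨⟨⟨0, h0⟩, v₁ _⟩, hKi _ (hv₁ _)⟩⟩
      refine SimpleGraph.Connected.mk fun a b => ?_
      obtain ⟨⟨⟨j, hj⟩, x⟩, hm⟩ := a
      obtain ⟨⟨⟨k, hk⟩, y⟩, hm'⟩ := b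
      exact (hanchor _ x hm).trans
        (((hzero j hj).symm.trans (hzero k hk)).trans (hanchor _ y hm').symm)
    · intro u c hc
      have htr : c.IsTrail := hc.isCircuit.isTrail
      have hA := trail_support
        (fun z : ↥S => ((z : Σ j, V j).1 : ℕ) ≤ (((u : Σ j, V j).1 : Fin t) : ℕ))
        (uniq_le (u : Σ j, V j).1) c htr le_rfl le_rfl
      have hB := trail_support
        (fun z : ↥S => (((u : Σ j, V j).1 : Fin t) : ℕ) ≤ ((z : Σ j, V j).1 : ℕ))
        (uniq_ge (u : Σ j, V j).1) c htr le_rfl le_rfl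
      obtain ⟨q, h1, h2⟩ := down_ex c
        (fun z hz => Fin.ext (le_antisymm (hA z hz) (hB z hz))) rfl rfl
      refine (hTi (u : Σ j, V j).1).2 q ⟨⟨⟨?_⟩, ?_⟩, ?_⟩
      · have hnd := htr.edges_nodup
        rw [← h1] at hnd
        exact hnd.of_map _
      · intro hq
        apply hc.not_nil
        rw [Walk.nil_iff_length_eq, ← Walk.length_edges, ← h1, hq]
        rfl
      · have hnd := hc.support_nodup
        rw [← h2, ← List.map_tail] at hnd
        exact hnd.of_map _
end

section
/- Let G be a graph, let x and s be distinct non-adjacent vertices of G, and let Y ⊆ V(G) be an independent set of G such that the neighborhood of x is exactly Y and every vertex of Y is adjacent to s. Then every set S ⊆ V(G) with x, s ∈ S such that the induced subgraph G[S] is a tree satisfies |S ∩ Y| = 1. -/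
open SimpleGraph

/-- The instance-selector property: if the neighborhood of `x` is exactly the
independent set `Y`, every vertex of `Y` is adjacent to `s`, and `x, s` are
distinct and non-adjacent, then every induced tree containing both `x` and `s`
contains exactly one vertex of `Y`. -/
theorem stmt14 (V : Type) [Fintype V] (G : SimpleGraph V) (x s : V)
    (hxs : x ≠ s) (hnadj : ¬ G.Adj x s) (Y : Set V)
    (hind : ∀ y ∈ Y, ∀ y' ∈ Y, ¬ G.Adj y y')
    (hNx : G.neighborSet x = Y) (hYs : ∀ y ∈ Y, G.Adj y s) :
    ∀ S : Set V, x ∈ S → s ∈ S → (G.induce S).IsTree → (S ∩ Y).ncard = 1 := by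
  intro S hx hs hT
  -- from y ∈ Y ∩ S, build the path x - y - s in the induced graph
  have hadj : ∀ y ∈ Y, G.Adj x y := by
    intro y hy; rw [← hNx] at hy; exact hy
  have mkPath : ∀ (y : V) (hyS : y ∈ S), y ∈ Y →
      ∃ p : (G.induce S).Walk ⟨x, hx⟩ ⟨s, hs⟩, p.IsPath ∧ p.getVert 1 = ⟨y, hyS⟩ := by
    intro y hyS hyY
    have a1 : (G.induce S).Adj ⟨x, hx⟩ ⟨y, hyS⟩ := hadj y hyY
    have a2 : (G.induce S).Adj ⟨y, hyS⟩ ⟨s, hs⟩ := hYs y hyY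
    refine ⟨SimpleGraph.Walk.cons a1 (SimpleGraph.Walk.cons a2 SimpleGraph.Walk.nil), ?_, rfl⟩
    have hxy : (⟨x, hx⟩ : S) ≠ ⟨y, hyS⟩ := fun h => a1.ne (by simpa using h)
    have hys : (⟨y, hyS⟩ : S) ≠ ⟨s, hs⟩ := a2.ne
    have hxs' : (⟨x, hx⟩ : S) ≠ ⟨s, hs⟩ := fun h => hxs (by simpa using congrArg Subtype.val h)
    simp [SimpleGraph.Walk.isPath_def, hxy, hys, hxs']
  -- uniqueness of paths in a tree
  have huniq := hT.existsUnique_path ⟨x, hx⟩ ⟨s, hs⟩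
  -- existence: take the unique path, its second vertex is a neighbor of x, hence in Y
  obtain ⟨p, hp, hup⟩ := huniq
  have hpn : ¬ p.Nil := by
    intro h
    exact hxs (by simpa using congrArg Subtype.val (SimpleGraph.Walk.Nil.eq h))
  have hadj1 : (G.induce S).Adj ⟨x, hx⟩ (p.getVert 1) := p.adj_snd hpn
  have hy0Y : (p.getVert 1 : V) ∈ Y := by
    rw [← hNx]
    exact hadj1
  have hy0S : (p.getVert 1 : V) ∈ S := (p.getVert 1).2
  -- show S ∩ Y = {p.getVert 1}
  have : S ∩ Y = {(p.getVert 1 : V)} := by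
    apply Set.eq_singleton_iff_unique_mem.2
    refine ⟨⟨hy0S, hy0Y⟩, ?_⟩
    rintro y ⟨hyS, hyY⟩
    obtain ⟨q, hq, hq1⟩ := mkPath y hyS hyY
    have := hup q hq
    have h1 : q.getVert 1 = p.getVert 1 := by rw [this]
    rw [hq1] at h1
    exact (congrArg Subtype.val h1.symm).symm
  rw [this, Set.ncard_singleton]
end
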